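/- Let A be a nonnegative n×n matrix with total entry sum s = ∑_{ij} A_{ij} = n². If cap(A) = 0, then Δ(A) ≥ 2n², where Δ(A) = (1/n)∑_{i=1}^n (s − n·r_i)² + (1/n)∑_{j=1}^n (s − n·c_j)² with r_i, c_j the row and column sums. -/

import Mathlib

open Matrix BigOperators

/-- Capacity of a nonnegative matrix. -/
noncomputable def matCap {ι κ : Type*} [Fintype ι] [Fintype κ] (A : Matrix ι κ ℝ) : ℝ :=
  sInf {c : ℝ | ∃ x : κ → ℝ, (∀ j, 0 < x j) ∧
    c = (Fintype.card ι : ℝ) * (∏ i, A.mulVec x i) ^ ((1 : ℝ) / (Fintype.card ι : ℝ)) /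
        (∏ j, x j) ^ ((1 : ℝ) / (Fintype.card κ : ℝ))}

/-- Size of a matrix: the sum of all entries. -/
noncomputable def matSize {ι κ : Type*} [Fintype ι] [Fintype κ] (A : Matrix ι κ ℝ) : ℝ :=
  ∑ i, ∑ j, A i j

/-- The measure Δ of distance to doubly balanced. -/
noncomputable def matDelta {ι κ : Type*} [Fintype ι] [Fintype κ] (A : Matrix ι κ ℝ) : ℝ :=
  (1 / (Fintype.card ι : ℝ)) * ∑ i, (matSize A - (Fintype.card ι : ℝ) * ∑ j, A i j) ^ 2 +
  (1 / (Fintype.card κ : ℝ)) * ∑ j, (matSize A - (Fintype.card κ : ℝ) * ∑ i, A i j) ^ 2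

lemma cs_combine (n m Z P Q : ℝ) (h0 : 0 ≤ m) (hmn : m ≤ n)
    (h1 : Z ^ 2 ≤ m * P) (h2 : Z ^ 2 ≤ (n - m) * Q) :
    n * Z ^ 2 ≤ m * (n - m) * (P + Q) := by
  nlinarith [mul_le_mul_of_nonneg_left h1 (by linarith : (0:ℝ) ≤ n - m),
    mul_le_mul_of_nonneg_left h2 h0]

/-- The core scalar inequality. -/
lemma core_ineq (n a b X Y S T : ℝ) (hn : 1 ≤ n) (ha0 : 0 ≤ a) (han : a ≤ n)
    (hb0 : 0 ≤ b) (hbn : b ≤ n) (hab : n + 1 ≤ a + b) (hXY : n ≤ X + Y)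
    (hS : 0 ≤ S) (hT : 0 ≤ T)
    (hX : n * X ^ 2 ≤ a * (n - a) * S) (hY : n * Y ^ 2 ≤ b * (n - b) * T) :
    2 * n ≤ S + T := by
  have hDa : 0 ≤ a * (n - a) := by nlinarith
  have hDb : 0 ≤ b * (n - b) := by nlinarith
  have hcross : 2 * n * X * Y ≤ a * (n - a) * T + b * (n - b) * S := by
    rcases le_or_gt (X * Y) 0 with h | h
    · nlinarith
    · nlinarith [mul_le_mul hX hY (by positivity) (mul_nonneg hDa hS),
        sq_nonneg (a * (n - a) * T - b * (n - b) * S),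
        mul_nonneg hDa hT, mul_nonneg hDb hS, sq_nonneg (X*Y),
        mul_pos (by nlinarith : (0:ℝ) < n) h]
  have hstep2 : n * (X + Y) ^ 2 ≤ (a * (n - a) + b * (n - b)) * (S + T) := by nlinarith
  have hstep3 : 2 * (a * (n - a) + b * (n - b)) ≤ n ^ 2 - 1 := by
    nlinarith [sq_nonneg (a - b), sq_nonneg (a + b - n - 1)]
  nlinarith [mul_le_mul_of_nonneg_right hstep3 (by linarith : (0:ℝ) ≤ S + T),
    sq_nonneg (X + Y), mul_le_mul hXY hXY (by linarith) (by linarith)]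

/-- If some permutation has all entries positive, then the capacity is positive. -/
lemma matCap_pos_of_perm {n : ℕ} (hn : 0 < n) (A : Matrix (Fin n) (Fin n) ℝ)
    (hA : ∀ i j, 0 ≤ A i j) (σ : Equiv.Perm (Fin n)) (hσ : ∀ i, 0 < A i (σ i)) :
    0 < matCap A := by
  have hP : 0 < ∏ i, A i (σ i) := Finset.prod_pos fun i _ => hσ i
  set ε : ℝ := (n : ℝ) * (∏ i, A i (σ i)) ^ ((1 : ℝ) / (n : ℝ)) with hε
  have hεpos : 0 < ε := by
    apply mul_pos (by exact_mod_cast hn)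
    exact Real.rpow_pos_of_pos hP _
  have hne : {c : ℝ | ∃ x : Fin n → ℝ, (∀ j, 0 < x j) ∧
      c = (Fintype.card (Fin n) : ℝ) *
        (∏ i, A.mulVec x i) ^ ((1 : ℝ) / (Fintype.card (Fin n) : ℝ)) /
        (∏ j, x j) ^ ((1 : ℝ) / (Fintype.card (Fin n) : ℝ))}.Nonempty := by
    exact ⟨_, fun _ => (1:ℝ), fun _ => one_pos, rfl⟩
  have hlb : ε ≤ matCap A := by
    apply le_csInf hne
    rintro c ⟨x, hx, rfl⟩
    have hQ : 0 < ∏ j, x j := Finset.prod_pos fun j _ => hx j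
    have hQp : 0 < (∏ j, x j) ^ ((1 : ℝ) / (Fintype.card (Fin n) : ℝ)) :=
      Real.rpow_pos_of_pos hQ _
    rw [le_div_iff₀ hQp]
    have hprod : (∏ i, A i (σ i)) * ∏ j, x j ≤ ∏ i, A.mulVec x i := by
      have h1 : ∏ i, (A i (σ i) * x (σ i)) ≤ ∏ i, A.mulVec x i := by
        apply Finset.prod_le_prod
        · intro i _; exact mul_nonneg (hA i (σ i)) (hx (σ i)).le
        · intro i _
          have : A.mulVec x i = ∑ j, A i j * x j := by
            simp [Matrix.mulVec, dotProduct]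
          rw [this]
          exact Finset.single_le_sum
            (fun j _ => mul_nonneg (hA i j) (hx j).le) (Finset.mem_univ (σ i))
      calc (∏ i, A i (σ i)) * ∏ j, x j = ∏ i, (A i (σ i) * x (σ i)) := by
            rw [Finset.prod_mul_distrib, Equiv.prod_comp σ x]
        _ ≤ _ := h1
    have hmono : ((∏ i, A i (σ i)) * ∏ j, x j) ^ ((1 : ℝ) / (Fintype.card (Fin n) : ℝ)) ≤
        (∏ i, A.mulVec x i) ^ ((1 : ℝ) / (Fintype.card (Fin n) : ℝ)) := by
      apply Real.rpow_le_rpow (by positivity) hprod (by positivity)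
    rw [Real.mul_rpow hP.le hQ.le] at hmono
    have : ε * (∏ j, x j) ^ ((1 : ℝ) / (Fintype.card (Fin n) : ℝ)) =
        (Fintype.card (Fin n) : ℝ) * ((∏ i, A i (σ i)) ^ ((1 : ℝ) / (Fintype.card (Fin n) : ℝ)) *
          (∏ j, x j) ^ ((1 : ℝ) / (Fintype.card (Fin n) : ℝ))) := by
      simp [hε, Fintype.card_fin]; ring
    rw [this]
    have hcard : (0:ℝ) ≤ (Fintype.card (Fin n) : ℝ) := by positivity
    calc (Fintype.card (Fin n) : ℝ) * ((∏ i, A i (σ i)) ^ ((1 : ℝ) / (Fintype.card (Fin n) : ℝ)) *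
          (∏ j, x j) ^ ((1 : ℝ) / (Fintype.card (Fin n) : ℝ)))
        ≤ (Fintype.card (Fin n) : ℝ) *
          (∏ i, A.mulVec x i) ^ ((1 : ℝ) / (Fintype.card (Fin n) : ℝ)) := by
          exact mul_le_mul_of_nonneg_left hmono hcard
      _ = _ := by ring
  linarith

set_option maxHeartbeats 1000000 in
/-- If a nonnegative `n × n` matrix with total entry sum `n ^ 2` has zero capacity,
then `Δ(A) ≥ 2 n ^ 2`. -/
theorem matDelta_ge_of_matCap_eq_zero {n : ℕ} (hn : 0 < n)
    (A : Matrix (Fin n) (Fin n) ℝ) (hA : ∀ i j, 0 ≤ A i j)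
    (hs : matSize A = (n : ℝ) ^ 2) (hcap : matCap A = 0) :
    2 * (n : ℝ) ^ 2 ≤ matDelta A := by
  classical
  -- Hall-type structure: a zero block
  set t : Fin n → Finset (Fin n) := fun i => Finset.univ.filter (fun j => A i j ≠ 0) with ht
  have hHall : ¬ ∀ s : Finset (Fin n), s.card ≤ (s.biUnion t).card := by
    intro h
    obtain ⟨f, hfinj, hft⟩ := (Finset.all_card_le_biUnion_card_iff_exists_injective t).mp h
    have hfbij : Function.Bijective f := Finite.injective_iff_bijective.mp hfinj
    set σ : Equiv.Perm (Fin n) := Equiv.ofBijective f hfbij with hσdef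
    have hσ : ∀ i, 0 < A i (σ i) := by
      intro i
      have : A i (f i) ≠ 0 := by
        have := hft i
        simp [ht] at this
        exact this
      exact lt_of_le_of_ne (hA i (f i)) (Ne.symm this)
    have := matCap_pos_of_perm hn A hA σ hσ
    rw [hcap] at this
    exact lt_irrefl 0 this
  push_neg at hHall
  obtain ⟨U, hU⟩ := hHall
  set N : Finset (Fin n) := U.biUnion t with hN
  set W : Finset (Fin n) := Nᶜ with hW
  have hblock : ∀ i ∈ U, ∀ j ∈ W, A i j = 0 := by
    intro i hi j hj
    by_contra hne
    have : j ∈ N := Finset.mem_biUnion.mpr ⟨i, hi, by simp [ht, hne]⟩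
    rw [hW, Finset.mem_compl] at hj
    exact hj this
  -- cardinalities
  have hNle : N.card ≤ n := by
    simpa using Finset.card_le_univ N
  have hUle : U.card ≤ n := by
    simpa using Finset.card_le_univ U
  have hWle : W.card ≤ n := by
    simpa using Finset.card_le_univ W
  have hWcard : W.card = n - N.card := by
    simp [hW, Finset.card_compl]
  have hcards : n + 1 ≤ U.card + W.card := by omega
  set a : ℝ := (U.card : ℝ) with hadef
  set b : ℝ := (W.card : ℝ) with hbdef
  have ha0 : 0 ≤ a := by positivity
  have hb0 : 0 ≤ b := by positivity
  have han : a ≤ (n : ℝ) := by rw [hadef]; exact_mod_cast hUle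
  have hbn : b ≤ (n : ℝ) := by rw [hbdef]; exact_mod_cast hWle
  have hab : (n : ℝ) + 1 ≤ a + b := by rw [hadef, hbdef]; exact_mod_cast hcards
  -- row and column sums
  set r : Fin n → ℝ := fun i => ∑ j, A i j with hrdef
  set c : Fin n → ℝ := fun j => ∑ i, A i j with hcdef
  have hrsum : ∑ i, r i = (n : ℝ) ^ 2 := hs
  have hcsum : ∑ j, c j = (n : ℝ) ^ 2 := by
    rw [← hs, matSize]; exact Finset.sum_comm
  -- the key mass inequality
  have hmass : ∑ i ∈ U, r i + ∑ j ∈ W, c j ≤ (n : ℝ) ^ 2 := by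
    have h1 : ∑ i ∈ U, r i = ∑ i ∈ U, ∑ j ∈ N, A i j := by
      apply Finset.sum_congr rfl
      intro i hi
      rw [hrdef]
      symm
      apply Finset.sum_subset (Finset.subset_univ N)
      intro j _ hj
      exact hblock i hi j (by rw [hW, Finset.mem_compl]; exact hj)
    have h2 : ∑ i ∈ U, ∑ j ∈ N, A i j ≤ ∑ j ∈ N, c j := by
      refine (Finset.sum_comm (s := U) (t := N)).trans_le ?_
      apply Finset.sum_le_sum
      intro j _
      exact Finset.sum_le_sum_of_subset_of_nonneg (Finset.subset_univ U)
        (fun i _ _ => hA i j)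
    have h3 : ∑ j ∈ N, c j + ∑ j ∈ W, c j = (n : ℝ) ^ 2 := by
      rw [hW, Finset.sum_add_sum_compl, hcsum]
    linarith
  -- deviations
  set x : Fin n → ℝ := fun i => (n : ℝ) - r i with hxdef
  set y : Fin n → ℝ := fun j => (n : ℝ) - c j with hydef
  have hxtot : ∑ i, x i = 0 := by
    rw [hxdef]
    simp only [Finset.sum_sub_distrib, hrsum, Finset.sum_const, Finset.card_univ,
      Fintype.card_fin, nsmul_eq_mul]
    ring
  have hytot : ∑ j, y j = 0 := by
    rw [hydef]
    simp only [Finset.sum_sub_distrib, hcsum, Finset.sum_const, Finset.card_univ,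
      Fintype.card_fin, nsmul_eq_mul]
    ring
  set X : ℝ := ∑ i ∈ U, x i with hXdef
  set Y : ℝ := ∑ j ∈ W, y j with hYdef
  have hXY : (n : ℝ) ≤ X + Y := by
    have hXval : X = a * n - ∑ i ∈ U, r i := by
      rw [hXdef, hxdef]
      simp [Finset.sum_sub_distrib, hadef]
    have hYval : Y = b * n - ∑ j ∈ W, c j := by
      rw [hYdef, hydef]
      simp [Finset.sum_sub_distrib, hbdef]
    nlinarith [hmass, hab, (by exact_mod_cast hn : (1:ℝ) ≤ (n:ℝ))]
  set Sx : ℝ := ∑ i, x i ^ 2 with hSxdef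
  set Sy : ℝ := ∑ j, y j ^ 2 with hSydef
  have hSx0 : 0 ≤ Sx := Finset.sum_nonneg fun i _ => sq_nonneg _
  have hSy0 : 0 ≤ Sy := Finset.sum_nonneg fun j _ => sq_nonneg _
  -- Cauchy-Schwarz bounds
  have key : ∀ (V : Finset (Fin n)) (z : Fin n → ℝ), (∑ i, z i = 0) →
      (n : ℝ) * (∑ i ∈ V, z i) ^ 2 ≤ (V.card : ℝ) * ((n:ℝ) - V.card) * ∑ i, z i ^ 2 := by
    intro V z hz
    have h1 : (∑ i ∈ V, z i) ^ 2 ≤ (V.card : ℝ) * ∑ i ∈ V, z i ^ 2 := by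
      exact_mod_cast sq_sum_le_card_mul_sum_sq (s := V) (f := z)
    have h2 : (∑ i ∈ V, z i) ^ 2 ≤ (Vᶜ.card : ℝ) * ∑ i ∈ Vᶜ, z i ^ 2 := by
      have hcompl : ∑ i ∈ Vᶜ, z i = -(∑ i ∈ V, z i) := by
        have := Finset.sum_add_sum_compl V z
        rw [hz] at this
        linarith
      have := sq_sum_le_card_mul_sum_sq (s := Vᶜ) (f := z)
      rw [hcompl] at this
      calc (∑ i ∈ V, z i) ^ 2 = (-(∑ i ∈ V, z i)) ^ 2 := by ring
        _ ≤ _ := by exact_mod_cast this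
    have hsplit : ∑ i ∈ V, z i ^ 2 + ∑ i ∈ Vᶜ, z i ^ 2 = ∑ i, z i ^ 2 := by
      rw [Finset.sum_add_sum_compl]
    have hccard : (Vᶜ.card : ℝ) = (n : ℝ) - (V.card : ℝ) := by
      have : Vᶜ.card = n - V.card := by simp [Finset.card_compl]
      have hle : V.card ≤ n := by simpa using Finset.card_le_univ V
      rw [this, Nat.cast_sub hle]
    rw [hccard] at h2
    have hV0 : (0:ℝ) ≤ (V.card : ℝ) := by positivity
    have hVn : (V.card : ℝ) ≤ (n : ℝ) := by
      exact_mod_cast (by simpa using Finset.card_le_univ V : V.card ≤ n)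
    rw [← hsplit]
    exact cs_combine (n:ℝ) (V.card:ℝ) _ _ _ hV0 hVn h1 h2
  have hX : (n : ℝ) * X ^ 2 ≤ a * ((n:ℝ) - a) * Sx := key U x hxtot
  have hY : (n : ℝ) * Y ^ 2 ≤ b * ((n:ℝ) - b) * Sy := key W y hytot
  have hn1 : (1 : ℝ) ≤ (n : ℝ) := by exact_mod_cast hn
  have hcore : 2 * (n : ℝ) ≤ Sx + Sy :=
    core_ineq n a b X Y Sx Sy hn1 ha0 han hb0 hbn hab hXY hSx0 hSy0 hX hY
  -- conclude
  have hδ : matDelta A = (n : ℝ) * Sx + (n : ℝ) * Sy := by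
    rw [matDelta, hs]
    simp only [Fintype.card_fin]
    have e1 : ∑ i, ((n:ℝ)^2 - (n:ℝ) * ∑ j, A i j) ^ 2 = (n:ℝ)^2 * Sx := by
      rw [hSxdef, Finset.mul_sum]
      apply Finset.sum_congr rfl
      intro i _
      rw [hxdef, hrdef]
      ring
    have e2 : ∑ j, ((n:ℝ)^2 - (n:ℝ) * ∑ i, A i j) ^ 2 = (n:ℝ)^2 * Sy := by
      rw [hSydef, Finset.mul_sum]
      apply Finset.sum_congr rfl
      intro j _
      rw [hydef, hcdef]
      ring
    rw [e1, e2]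
    have hnne : (n : ℝ) ≠ 0 := by positivity
    field_simp
  rw [hδ]
  nlinarith [hcore, hn1]
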